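/- arXiv:1701.04606 — 2 statements merged into one kernel-verified Lean document; each statement's English description precedes it below -/
import Mathlib

section
/- Let μ be a partition and let p₁, p₂ be two wb pairs in x_μ whose flips (performed compatibly) remove rim hooks γ₁, γ₂ from μ. If p₁ and p₂ are disjoint as intervals (and have different white dots), then γ₁ and γ₂ are disjoint rim hooks, occupying disjoint sets of rows and disjoint sets of columns; if p₁ is nested inside p₂ (the interval of p₁ lies strictly inside that of p₂), then γ₁ is nested inside γ₂, with the rows and columns of γ₁ contained among those of γ₂. -/
open Finset

/-- The content of a box in position `(i, j)` is `j - i`. -/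
def content (b : ℕ × ℕ) : ℤ := (b.2 : ℤ) - (b.1 : ℤ)

/-- The anticontent of a box in position `(i, j)` is `i + j`. -/
def anticontent (b : ℕ × ℕ) : ℤ := (b.1 : ℤ) + (b.2 : ℤ)

/-- Two boxes are adjacent if they share a side. -/
def BoxAdj (a b : ℕ × ℕ) : Prop :=
  (a.1 = b.1 ∧ (a.2 + 1 = b.2 ∨ b.2 + 1 = a.2)) ∨
  (a.2 = b.2 ∧ (a.1 + 1 = b.1 ∨ b.1 + 1 = a.1))

/-- A finite set of boxes is connected if any two boxes are linked by a chain of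
adjacent boxes inside the set. -/
def IsConnectedBoxes (S : Finset (ℕ × ℕ)) : Prop :=
  ∀ a ∈ S, ∀ b ∈ S,
    Relation.ReflTransGen (fun x y => x ∈ S ∧ y ∈ S ∧ BoxAdj x y) a b

/-- A skew Young diagram: the difference of two Young diagrams `l ⊆ m`. -/
def IsSkew (S : Finset (ℕ × ℕ)) : Prop :=
  ∃ l m : YoungDiagram, l ≤ m ∧ S = m.cells \ l.cells

/-- A hook: a nonempty connected skew Young diagram with no two boxes of the same content. -/
def IsHook (S : Finset (ℕ × ℕ)) : Prop :=
  IsSkew S ∧ S.Nonempty ∧ IsConnectedBoxes S ∧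
    ∀ a ∈ S, ∀ b ∈ S, content a = content b → a = b

/-- Height: number of rows occupied. -/
def ht (S : Finset (ℕ × ℕ)) : ℕ := (S.image Prod.fst).card

/-- Width: number of columns occupied. -/
def wd (S : Finset (ℕ × ℕ)) : ℕ := (S.image Prod.snd).card

/-- Two hooks are disjoint if no box of one equals or shares a side with a box of the other. -/
def HooksDisjoint (γ δ : Finset (ℕ × ℕ)) : Prop :=
  ∀ a ∈ γ, ∀ b ∈ δ, a ≠ b ∧ ¬ BoxAdj a b

/-- `γ` is nested in `δ`: each lower and right side of a box of `γ` is shared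
with another box of `γ` or a box of `δ`. -/
def NestedIn (γ δ : Finset (ℕ × ℕ)) : Prop :=
  ∀ b ∈ γ, ((b.1 + 1, b.2) ∈ γ ∨ (b.1 + 1, b.2) ∈ δ) ∧
           ((b.1, b.2 + 1) ∈ γ ∨ (b.1, b.2 + 1) ∈ δ)

/-- A covering of `κ`: a decomposition of its boxes into connected hooks, any
two of which are disjoint or nested. -/
def IsCovering (κ : Finset (ℕ × ℕ)) (C : Finset (Finset (ℕ × ℕ))) : Prop :=
  (∀ γ ∈ C, IsHook γ) ∧
  (∀ γ ∈ C, γ ⊆ κ) ∧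
  (∀ b ∈ κ, ∃! γ, γ ∈ C ∧ b ∈ γ) ∧
  (∀ γ ∈ C, ∀ δ ∈ C, γ ≠ δ → HooksDisjoint γ δ ∨ NestedIn γ δ ∨ NestedIn δ γ)

/-- The sequence `x_λ = (λ₁, λ₂ − 1, λ₃ − 2, …)` (indexed from `0`). -/
def xseq (μ : YoungDiagram) (k : ℕ) : ℤ := (μ.rowLen k : ℤ) - (k : ℤ)

/-- `lam` is obtained from `μ` by flipping the wb pair `(lw, lb)`:
`lw < lb`, `lw` is white and `lb` is black in `x_μ`, and the black set of
`x_lam` is that of `x_μ` with `lb` replaced by `lw`. -/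
def IsFlip (μ lam : YoungDiagram) (lw lb : ℤ) : Prop :=
  lw < lb ∧ lw ∉ Set.range (xseq μ) ∧ lb ∈ Set.range (xseq μ) ∧
    Set.range (xseq lam) = insert lw (Set.range (xseq μ) \ {lb})

/-- The number of black dots of `x_μ` in the interval `[a, b]`. -/
noncomputable def blackCount (μ : YoungDiagram) (a b : ℤ) : ℕ :=
  Nat.card {n : ℤ // n ∈ Set.Icc a b ∧ n ∈ Set.range (xseq μ)}

/-- The number of white dots of `x_μ` in the interval `[a, b]`. -/
noncomputable def whiteCount (μ : YoungDiagram) (a b : ℤ) : ℕ :=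
  Nat.card {n : ℤ // n ∈ Set.Icc a b ∧ n ∉ Set.range (xseq μ)}


namespace FlipAux

lemma sub_bound {x : ℕ → ℤ} (hx : StrictAnti x) (i : ℕ) : x i ≤ x 0 - i := by
  induction i with
  | zero => simp
  | succ n ih =>
    have h : x (n+1) < x n := hx (by omega)
    push_cast
    push_cast at ih
    omega

lemma exists_lt {x : ℕ → ℤ} (hx : StrictAnti x) (t : ℤ) : ∃ i, x i < t := by
  refine ⟨(x 0 + 1 - t).toNat, ?_⟩
  have h1 := sub_bound hx (x 0 + 1 - t).toNat
  have h2 : (x 0 + 1 - t) ≤ ((x 0 + 1 - t).toNat : ℤ) := Int.self_le_toNat _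
  omega

noncomputable def cnt {x : ℕ → ℤ} (hx : StrictAnti x) (t : ℤ) : ℕ :=
  Nat.find (exists_lt hx t)

lemma lt_cnt_iff {x : ℕ → ℤ} (hx : StrictAnti x) (t : ℤ) (i : ℕ) :
    i < cnt hx t ↔ t ≤ x i := by
  constructor
  · intro h
    have := Nat.find_min (exists_lt hx t) h
    omega
  · intro h
    by_contra hc
    push_neg at hc
    have h2 : x (cnt hx t) < t := Nat.find_spec (exists_lt hx t)
    have h3 : x i ≤ x (cnt hx t) := hx.antitone hc
    omega

lemma range_inter {x : ℕ → ℤ} (hx : StrictAnti x) (t : ℤ) :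
    Set.range x ∩ Set.Ici t = x '' Set.Iio (cnt hx t) := by
  ext n
  constructor
  · rintro ⟨⟨i, rfl⟩, (h : t ≤ x i)⟩
    exact ⟨i, (lt_cnt_iff hx t i).2 h, rfl⟩
  · rintro ⟨i, hi, rfl⟩
    exact ⟨⟨i, rfl⟩, (lt_cnt_iff hx t i).1 hi⟩

lemma finite_inter {x : ℕ → ℤ} (hx : StrictAnti x) (t : ℤ) :
    (Set.range x ∩ Set.Ici t).Finite := by
  rw [range_inter hx t]
  exact (Set.finite_Iio _).image x

lemma ncard_inter {x : ℕ → ℤ} (hx : StrictAnti x) (t : ℤ) :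
    (Set.range x ∩ Set.Ici t).ncard = cnt hx t := by
  rw [range_inter hx t, Set.ncard_image_of_injective _ hx.injective,
    ← Finset.coe_Iio, Set.ncard_coe_finset, Nat.card_Iio]

lemma cnt_eq_low {x x' : ℕ → ℤ} {w b : ℤ} (hx : StrictAnti x) (hx' : StrictAnti x')
    (hR : Set.range x' = insert w (Set.range x \ {b}))
    (hwb : w < b) (hw : w ∉ Set.range x) (hb : b ∈ Set.range x)
    (t : ℤ) (ht : t ≤ w) : cnt hx' t = cnt hx t := by
  have hset : Set.range x' ∩ Set.Ici t = insert w ((Set.range x ∩ Set.Ici t) \ {b}) := by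
    ext n
    simp only [Set.mem_inter_iff, Set.mem_Ici, Set.mem_insert_iff, Set.mem_diff,
      Set.mem_singleton_iff, hR]
    constructor
    · rintro ⟨h1 | ⟨h2, h3⟩, h4⟩
      · exact Or.inl h1
      · exact Or.inr ⟨⟨h2, h4⟩, h3⟩
    · rintro (rfl | ⟨⟨h2, h4⟩, h3⟩)
      · exact ⟨Or.inl rfl, ht⟩
      · exact ⟨Or.inr ⟨h2, h3⟩, h4⟩
  have hwmem : w ∉ (Set.range x ∩ Set.Ici t) \ {b} := fun h => hw h.1.1
  have hbmem : b ∈ Set.range x ∩ Set.Ici t := ⟨hb, Set.mem_Ici.2 (by omega)⟩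
  have e1 := Set.ncard_diff_singleton_add_one hbmem (finite_inter hx t)
  have e2 := Set.ncard_insert_of_notMem hwmem ((finite_inter hx t).diff)
  have e3 := ncard_inter hx t
  have e4 := ncard_inter hx' t
  rw [hset] at e4
  omega

lemma cnt_eq_high {x x' : ℕ → ℤ} {w b : ℤ} (hx : StrictAnti x) (hx' : StrictAnti x')
    (hR : Set.range x' = insert w (Set.range x \ {b}))
    (hwb : w < b) (hw : w ∉ Set.range x) (hb : b ∈ Set.range x)
    (t : ℤ) (ht : b < t) : cnt hx' t = cnt hx t := by
  have hset : Set.range x' ∩ Set.Ici t = Set.range x ∩ Set.Ici t := by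
    ext n
    simp only [Set.mem_inter_iff, Set.mem_Ici, Set.mem_insert_iff, Set.mem_diff,
      Set.mem_singleton_iff, hR]
    constructor
    · rintro ⟨rfl | ⟨h2, h3⟩, h4⟩
      · omega
      · exact ⟨h2, h4⟩
    · rintro ⟨h2, h4⟩
      exact ⟨Or.inr ⟨h2, fun hnb => by omega⟩, h4⟩
  have e3 := ncard_inter hx t
  have e4 := ncard_inter hx' t
  rw [hset, e3] at e4
  omega

lemma cnt_mid {x x' : ℕ → ℤ} {w b : ℤ} (hx : StrictAnti x) (hx' : StrictAnti x')
    (hR : Set.range x' = insert w (Set.range x \ {b}))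
    (hwb : w < b) (hw : w ∉ Set.range x) (hb : b ∈ Set.range x)
    (t : ℤ) (ht1 : w < t) (ht2 : t ≤ b) : cnt hx' t + 1 = cnt hx t := by
  have hset : Set.range x' ∩ Set.Ici t = (Set.range x ∩ Set.Ici t) \ {b} := by
    ext n
    simp only [Set.mem_inter_iff, Set.mem_Ici, Set.mem_insert_iff, Set.mem_diff,
      Set.mem_singleton_iff, hR]
    constructor
    · rintro ⟨rfl | ⟨h2, h3⟩, h4⟩
      · omega
      · exact ⟨⟨h2, h4⟩, h3⟩
    · rintro ⟨⟨h2, h4⟩, h3⟩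
      exact ⟨Or.inr ⟨h2, h3⟩, h4⟩
  have hbmem : b ∈ Set.range x ∩ Set.Ici t := ⟨hb, ht2⟩
  have e1 := Set.ncard_diff_singleton_add_one hbmem (finite_inter hx t)
  have e3 := ncard_inter hx t
  have e4 := ncard_inter hx' t
  rw [hset] at e4
  omega

lemma cnt_le {x x' : ℕ → ℤ} {w b : ℤ} (hx : StrictAnti x) (hx' : StrictAnti x')
    (hR : Set.range x' = insert w (Set.range x \ {b}))
    (hwb : w < b) (hw : w ∉ Set.range x) (hb : b ∈ Set.range x)
    (t : ℤ) : cnt hx' t ≤ cnt hx t := by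
  rcases le_or_gt t w with h | h
  · rw [cnt_eq_low hx hx' hR hwb hw hb t h]
  rcases le_or_gt t b with h2 | h2
  · have := cnt_mid hx hx' hR hwb hw hb t h h2
    omega
  · rw [cnt_eq_high hx hx' hR hwb hw hb t h2]

lemma P1 {x x' : ℕ → ℤ} {w b : ℤ} (hx : StrictAnti x) (hx' : StrictAnti x')
    (hR : Set.range x' = insert w (Set.range x \ {b}))
    (hwb : w < b) (hw : w ∉ Set.range x) (hb : b ∈ Set.range x)
    (i : ℕ) : x' i ≤ x i := by
  by_contra h
  push_neg at h
  have h1 : i < cnt hx' (x i + 1) := (lt_cnt_iff hx' _ i).2 (by omega)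
  have h2 := cnt_le hx hx' hR hwb hw hb (x i + 1)
  have h3 := (lt_cnt_iff hx (x i + 1) i).1 (lt_of_lt_of_le h1 h2)
  omega

lemma P2 {x x' : ℕ → ℤ} {w b : ℤ} (hx : StrictAnti x) (hx' : StrictAnti x')
    (hR : Set.range x' = insert w (Set.range x \ {b}))
    (hwb : w < b) (hw : w ∉ Set.range x) (hb : b ∈ Set.range x)
    (i : ℕ) (h : x' i < x i) : w ≤ x' i ∧ x i ≤ b := by
  constructor
  · have ha : ¬ (i < cnt hx' (x' i + 1)) := by rw [lt_cnt_iff]; omega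
    have hb2 : i < cnt hx (x' i + 1) := (lt_cnt_iff hx _ i).2 (by omega)
    rcases le_or_gt (x' i + 1) w with h1 | h1
    · rw [cnt_eq_low hx hx' hR hwb hw hb _ h1] at ha; omega
    rcases le_or_gt (x' i + 1) b with h2 | h2
    · omega
    · rw [cnt_eq_high hx hx' hR hwb hw hb _ h2] at ha; omega
  · have ha : ¬ (i < cnt hx' (x i)) := by rw [lt_cnt_iff]; omega
    have hb2 : i < cnt hx (x i) := (lt_cnt_iff hx _ i).2 le_rfl
    rcases le_or_gt (x i) w with h1 | h1
    · rw [cnt_eq_low hx hx' hR hwb hw hb _ h1] at ha; omega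
    rcases le_or_gt (x i) b with h2 | h2
    · omega
    · rw [cnt_eq_high hx hx' hR hwb hw hb _ h2] at ha; omega

lemma P3 {x x' : ℕ → ℤ} {w b : ℤ} (hx : StrictAnti x) (hx' : StrictAnti x')
    (hR : Set.range x' = insert w (Set.range x \ {b}))
    (hwb : w < b) (hw : w ∉ Set.range x) (hb : b ∈ Set.range x)
    (i : ℕ) (h1 : w < x i) (h2 : x i ≤ b) : x' i < x i := by
  have hm := cnt_mid hx hx' hR hwb hw hb (x i) h1 h2
  have hi : i < cnt hx (x i) := (lt_cnt_iff hx _ i).2 le_rfl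
  have hnext : ¬ (i + 1 < cnt hx (x i)) := by
    rw [lt_cnt_iff]
    have : x (i+1) < x i := hx (by omega)
    omega
  have hcnt' : ¬ (i < cnt hx' (x i)) := by omega
  rw [lt_cnt_iff] at hcnt'
  omega

lemma neg_mem_range {y : ℕ → ℤ} (n : ℤ) :
    (n ∈ Set.range fun i => -(y i)) ↔ -n ∈ Set.range y := by
  constructor
  · rintro ⟨i, rfl⟩; exact ⟨i, by ring⟩
  · rintro ⟨i, hi⟩; exact ⟨i, show -(y i) = n by omega⟩

lemma neg_range_flip {y y' : ℕ → ℤ} {W B : ℤ}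
    (hR : Set.range y' = insert B (Set.range y \ {W})) :
    Set.range (fun i => -(y' i)) = insert (-B) (Set.range (fun i => -(y i)) \ {-W}) := by
  ext n
  rw [neg_mem_range, hR]
  simp only [Set.mem_insert_iff, Set.mem_diff, Set.mem_singleton_iff, neg_mem_range, neg_neg]
  constructor
  · rintro (h | ⟨h1, h2⟩)
    · left; omega
    · right; exact ⟨h1, fun hc => h2 (by omega)⟩
  · rintro (h | ⟨h1, h2⟩)
    · left; omega
    · right; exact ⟨h1, fun hc => h2 (by omega)⟩

lemma Q1 {y y' : ℕ → ℤ} {W B : ℤ} (hy : StrictMono y) (hy' : StrictMono y')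
    (hR : Set.range y' = insert B (Set.range y \ {W}))
    (hWB : W < B) (hW : W ∈ Set.range y) (hB : B ∉ Set.range y) (i : ℕ) : y i ≤ y' i := by
  have h := P1 hy.neg hy'.neg (neg_range_flip hR) (by omega)
    (by rw [neg_mem_range, neg_neg]; exact hB)
    (by rw [neg_mem_range, neg_neg]; exact hW) i
  omega

lemma Q2 {y y' : ℕ → ℤ} {W B : ℤ} (hy : StrictMono y) (hy' : StrictMono y')
    (hR : Set.range y' = insert B (Set.range y \ {W}))
    (hWB : W < B) (hW : W ∈ Set.range y) (hB : B ∉ Set.range y) (i : ℕ)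
    (h : y i < y' i) : W ≤ y i ∧ y' i ≤ B := by
  have h2 := P2 hy.neg hy'.neg (neg_range_flip hR) (by omega)
    (by rw [neg_mem_range, neg_neg]; exact hB)
    (by rw [neg_mem_range, neg_neg]; exact hW) i (show -(y' i) < -(y i) by omega)
  omega

lemma Q3 {y y' : ℕ → ℤ} {W B : ℤ} (hy : StrictMono y) (hy' : StrictMono y')
    (hR : Set.range y' = insert B (Set.range y \ {W}))
    (hWB : W < B) (hW : W ∈ Set.range y) (hB : B ∉ Set.range y) (i : ℕ)
    (h1 : W ≤ y i) (h2 : y i < B) : y i < y' i := by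
  have h3 := P3 hy.neg hy'.neg (neg_range_flip hR) (by omega)
    (by rw [neg_mem_range, neg_neg]; exact hB)
    (by rw [neg_mem_range, neg_neg]; exact hW) i (show -B < -(y i) by omega)
    (show -(y i) ≤ -W by omega)
  omega

lemma xseq_strictAnti (μ : YoungDiagram) : StrictAnti (xseq μ) :=
  strictAnti_nat_of_succ_lt fun n => by
    have h := μ.rowLen_anti n (n + 1) (by omega)
    simp only [xseq]
    push_cast
    omega

/-- The enumeration of white positions, shifted: `yseq μ j = j - colLen j + 1`. -/
def yseq (μ : YoungDiagram) (j : ℕ) : ℤ := (j : ℤ) - μ.colLen j + 1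

lemma yseq_strictMono (μ : YoungDiagram) : StrictMono (yseq μ) :=
  strictMono_nat_of_lt_succ fun n => by
    have h := μ.colLen_anti n (n + 1) (by omega)
    simp only [yseq]
    push_cast
    omega

lemma mem_x {μ : YoungDiagram} {i j : ℕ} : (i, j) ∈ μ ↔ (j : ℤ) - i < xseq μ i := by
  rw [YoungDiagram.mem_iff_lt_rowLen]
  simp only [xseq]
  omega

lemma mem_y {μ : YoungDiagram} {i j : ℕ} : (i, j) ∈ μ ↔ yseq μ j ≤ (j : ℤ) - i := by
  rw [YoungDiagram.mem_iff_lt_colLen]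
  simp only [yseq]
  omega

lemma range_yseq (μ : YoungDiagram) : Set.range (yseq μ) = (Set.range (xseq μ))ᶜ := by
  ext n
  simp only [Set.mem_range, Set.mem_compl_iff]
  constructor
  · rintro ⟨j, rfl⟩ ⟨k, hk⟩
    simp only [xseq, yseq] at hk
    by_cases hkc : k < μ.colLen j
    · have hmem : (k, j) ∈ μ := YoungDiagram.mem_iff_lt_colLen.2 hkc
      rw [YoungDiagram.mem_iff_lt_rowLen] at hmem
      omega
    · have hmem : (k, j) ∉ μ := fun h => hkc (YoungDiagram.mem_iff_lt_colLen.1 h)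
      rw [YoungDiagram.mem_iff_lt_rowLen] at hmem
      omega
  · intro hn
    have hnr : ∀ k, xseq μ k ≠ n := fun k hk => hn ⟨k, hk⟩
    set c := cnt (xseq_strictAnti μ) n with hc
    have hc1 : xseq μ c < n := by
      have := (lt_cnt_iff (xseq_strictAnti μ) n c).not.1 (by omega)
      push_neg at this
      omega
    have hge : (0 : ℤ) ≤ n - 1 + c := by
      have h0 : (0 : ℤ) ≤ (μ.rowLen c : ℤ) := by positivity
      simp only [xseq] at hc1
      omega
    refine ⟨(n - 1 + c).toNat, ?_⟩
    set j := (n - 1 + c).toNat with hjdef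
    have hj : (j : ℤ) = n - 1 + c := Int.toNat_of_nonneg hge
    have hcol : μ.colLen j = c := by
      have h1 : (c, j) ∉ μ := by
        rw [mem_x]
        push_neg
        omega
      have h2 : ¬ c < μ.colLen j := fun h => h1 (YoungDiagram.mem_iff_lt_colLen.2 h)
      rcases Nat.eq_zero_or_pos c with h0 | h0
      · omega
      · have hlt : n ≤ xseq μ (c - 1) :=
          (lt_cnt_iff (xseq_strictAnti μ) n (c - 1)).1 (by omega)
        have hne := hnr (c - 1)
        have h3 : (c - 1, j) ∈ μ := by
          rw [mem_x]
          have : ((c - 1 : ℕ) : ℤ) = (c : ℤ) - 1 := by omega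
          omega
        have h4 : c - 1 < μ.colLen j := YoungDiagram.mem_iff_lt_colLen.1 h3
        omega
    simp only [yseq, hcol]
    omega

lemma mem_skew_x {μ ν : YoungDiagram} {i j : ℕ} :
    (i, j) ∈ μ.cells \ ν.cells ↔ xseq ν i ≤ (j : ℤ) - i ∧ (j : ℤ) - i < xseq μ i := by
  rw [Finset.mem_sdiff, YoungDiagram.mem_cells, YoungDiagram.mem_cells, mem_x, mem_x]
  omega

lemma mem_skew_y {μ ν : YoungDiagram} {i j : ℕ} :
    (i, j) ∈ μ.cells \ ν.cells ↔ yseq μ j ≤ (j : ℤ) - i ∧ (j : ℤ) - i < yseq ν j := by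
  rw [Finset.mem_sdiff, YoungDiagram.mem_cells, YoungDiagram.mem_cells, mem_y, mem_y]
  omega

lemma mem_row_image {μ ν : YoungDiagram} {i : ℕ} :
    i ∈ (μ.cells \ ν.cells).image Prod.fst ↔ xseq ν i < xseq μ i := by
  simp only [Finset.mem_image]
  constructor
  · rintro ⟨⟨i', j⟩, hmem, rfl⟩
    have h := mem_skew_x.1 hmem
    exact lt_of_le_of_lt h.1 h.2
  · intro h
    have hrow : ν.rowLen i < μ.rowLen i := by simp only [xseq] at h; omega
    refine ⟨(i, μ.rowLen i - 1), ?_, rfl⟩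
    rw [Finset.mem_sdiff, YoungDiagram.mem_cells, YoungDiagram.mem_cells,
      YoungDiagram.mem_iff_lt_rowLen, YoungDiagram.mem_iff_lt_rowLen]
    omega

lemma mem_col_image {μ ν : YoungDiagram} {j : ℕ} :
    j ∈ (μ.cells \ ν.cells).image Prod.snd ↔ yseq μ j < yseq ν j := by
  simp only [Finset.mem_image]
  constructor
  · rintro ⟨⟨i, j'⟩, hmem, rfl⟩
    have h := mem_skew_y.1 hmem
    exact lt_of_le_of_lt h.1 h.2
  · intro h
    have hcol : ν.colLen j < μ.colLen j := by simp only [yseq] at h; omega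
    refine ⟨(μ.colLen j - 1, j), ?_, rfl⟩
    rw [Finset.mem_sdiff, YoungDiagram.mem_cells, YoungDiagram.mem_cells,
      YoungDiagram.mem_iff_lt_colLen, YoungDiagram.mem_iff_lt_colLen]
    omega

section FlipLemmas

variable {μ ν : YoungDiagram} {lw lb : ℤ} (h : IsFlip μ ν lw lb)
include h

lemma flipA1 (i : ℕ) : xseq ν i ≤ xseq μ i :=
  P1 (xseq_strictAnti μ) (xseq_strictAnti ν) h.2.2.2 h.1 h.2.1 h.2.2.1 i

lemma flipA2 (i : ℕ) (hlt : xseq ν i < xseq μ i) : lw ≤ xseq ν i ∧ xseq μ i ≤ lb :=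
  P2 (xseq_strictAnti μ) (xseq_strictAnti ν) h.2.2.2 h.1 h.2.1 h.2.2.1 i hlt

lemma flipA3 (i : ℕ) (h1 : lw < xseq μ i) (h2 : xseq μ i ≤ lb) : xseq ν i < xseq μ i :=
  P3 (xseq_strictAnti μ) (xseq_strictAnti ν) h.2.2.2 h.1 h.2.1 h.2.2.1 i h1 h2

lemma yflip : Set.range (yseq ν) = insert lb (Set.range (yseq μ) \ {lw}) := by
  obtain ⟨hwb, hw, hb, hR⟩ := h
  rw [range_yseq, range_yseq, hR]
  ext n
  simp only [Set.mem_compl_iff, Set.mem_insert_iff, Set.mem_diff, Set.mem_singleton_iff]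
  by_cases h1 : n = lb <;> by_cases h2 : n = lw <;>
    by_cases h3 : n ∈ Set.range (xseq μ) <;>
    simp only [h1, h2, h3] <;> subst_vars <;> tauto

lemma flip_hW : lw ∈ Set.range (yseq μ) := by
  rw [range_yseq]; exact h.2.1

lemma flip_hB : lb ∉ Set.range (yseq μ) := by
  rw [range_yseq]
  simp only [Set.mem_compl_iff, not_not]
  exact h.2.2.1

lemma flipB1 (j : ℕ) : yseq μ j ≤ yseq ν j :=
  Q1 (yseq_strictMono μ) (yseq_strictMono ν) (yflip h) h.1 (flip_hW h) (flip_hB h) j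

lemma flipB2 (j : ℕ) (hlt : yseq μ j < yseq ν j) : lw ≤ yseq μ j ∧ yseq ν j ≤ lb :=
  Q2 (yseq_strictMono μ) (yseq_strictMono ν) (yflip h) h.1 (flip_hW h) (flip_hB h) j hlt

lemma flipB3 (j : ℕ) (h1 : lw ≤ yseq μ j) (h2 : yseq μ j < lb) : yseq μ j < yseq ν j :=
  Q3 (yseq_strictMono μ) (yseq_strictMono ν) (yflip h) h.1 (flip_hW h) (flip_hB h) j h1 h2

end FlipLemmas

end FlipAux

open FlipAux

/-- Flipping two wb pairs compatibly (first `(lw₂, lb₂)` in `x_μ`, giving `ν`,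
then `(lw₁, lb₁)` in `x_ν`) removes rim hooks `γ₂ = μ/ν` and `γ₁ = ν/λ`.
If the pairs are disjoint as intervals then the rim hooks are disjoint, with
disjoint sets of rows and of columns; if the first pair is nested strictly
inside the second then `γ₁` is nested in `γ₂`, with its rows and columns among
those of `γ₂`. -/
theorem flips_disjoint_or_nested (μ ν lam : YoungDiagram) (lw₁ lb₁ lw₂ lb₂ : ℤ)
    (h₂ : IsFlip μ ν lw₂ lb₂) (h₁ : IsFlip ν lam lw₁ lb₁)
    (hw₁ : lw₁ ∉ Set.range (xseq μ)) (hb₁ : lb₁ ∈ Set.range (xseq μ)) :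
    ((lb₁ < lw₂ ∨ lb₂ < lw₁) →
      HooksDisjoint (ν.cells \ lam.cells) (μ.cells \ ν.cells) ∧
      Disjoint ((ν.cells \ lam.cells).image Prod.fst)
        ((μ.cells \ ν.cells).image Prod.fst) ∧
      Disjoint ((ν.cells \ lam.cells).image Prod.snd)
        ((μ.cells \ ν.cells).image Prod.snd)) ∧
    ((lw₂ < lw₁ ∧ lb₁ < lb₂) →
      NestedIn (ν.cells \ lam.cells) (μ.cells \ ν.cells) ∧
      (ν.cells \ lam.cells).image Prod.fst ⊆ (μ.cells \ ν.cells).image Prod.fst ∧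
      (ν.cells \ lam.cells).image Prod.snd ⊆ (μ.cells \ ν.cells).image Prod.snd) := by
  have A1₂ := flipA1 h₂
  have A2₂ := flipA2 h₂
  have A3₂ := flipA3 h₂
  have B1₂ := flipB1 h₂
  have B2₂ := flipB2 h₂
  have B3₂ := flipB3 h₂
  have A2₁ := flipA2 h₁
  have B2₁ := flipB2 h₁
  have hlt₂ := h₂.1
  have hlt₁ := h₁.1
  constructor
  · intro hd
    refine ⟨?_, ?_, ?_⟩
    · rintro ⟨i1, j1⟩ ha ⟨i2, j2⟩ hb
      obtain ⟨ha1, ha2⟩ := mem_skew_x.1 ha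
      obtain ⟨hb1, hb2⟩ := mem_skew_x.1 hb
      obtain ⟨hA1, hA2⟩ := A2₁ i1 (lt_of_le_of_lt ha1 ha2)
      obtain ⟨hB1, hB2⟩ := A2₂ i2 (lt_of_le_of_lt hb1 hb2)
      constructor
      · intro he
        rw [Prod.mk.injEq] at he
        obtain ⟨rfl, rfl⟩ := he
        omega
      · intro hadj
        simp only [BoxAdj] at hadj
        rcases hadj with ⟨h5, h6⟩ | ⟨h5, h6⟩ <;> omega
    · rw [Finset.disjoint_left]
      intro i hi1 hi2
      rw [mem_row_image] at hi1 hi2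
      obtain ⟨hA1, hA2⟩ := A2₁ i hi1
      obtain ⟨hB1, hB2⟩ := A2₂ i hi2
      omega
    · rw [Finset.disjoint_left]
      intro j hj1 hj2
      rw [mem_col_image] at hj1 hj2
      obtain ⟨hA1, hA2⟩ := B2₁ j hj1
      obtain ⟨hB1, hB2⟩ := B2₂ j hj2
      omega
  · rintro ⟨hn1, hn2⟩
    have key_row : ∀ i, xseq lam i < xseq ν i → xseq ν i < xseq μ i := by
      intro i h
      obtain ⟨k1, k2⟩ := A2₁ i h
      rcases lt_or_eq_of_le (A1₂ i) with hlt | heq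
      · exact hlt
      · exact A3₂ i (by omega) (by omega)
    have key_col : ∀ j, yseq ν j < yseq lam j → yseq μ j < yseq ν j := by
      intro j h
      obtain ⟨k1, k2⟩ := B2₁ j h
      rcases lt_or_eq_of_le (B1₂ j) with hlt | heq
      · exact hlt
      · exact B3₂ j (by omega) (by omega)
    refine ⟨?_, ?_, ?_⟩
    · rintro ⟨i, j⟩ hmem
      obtain ⟨hx1, hx2⟩ := mem_skew_x.1 hmem
      obtain ⟨hy1, hy2⟩ := mem_skew_y.1 hmem
      dsimp only
      constructor
      · by_cases hc : yseq ν j ≤ (j : ℤ) - i - 1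
        · left
          refine mem_skew_y.2 ⟨?_, ?_⟩ <;> push_cast <;> omega
        · right
          have h5 : yseq μ j < yseq ν j := key_col j (by omega)
          refine mem_skew_y.2 ⟨?_, ?_⟩ <;> push_cast <;> omega
      · by_cases hc : (j : ℤ) + 1 - i < xseq ν i
        · left
          refine mem_skew_x.2 ⟨?_, ?_⟩ <;> push_cast <;> omega
        · right
          have h5 : xseq ν i < xseq μ i := key_row i (by omega)
          refine mem_skew_x.2 ⟨?_, ?_⟩ <;> push_cast <;> omega
    · refine Finset.subset_iff.mpr fun i hi => ?_
      rw [mem_row_image] at hi ⊢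
      exact key_row _ hi
    · refine Finset.subset_iff.mpr fun j hj => ?_
      rw [mem_col_image] at hj ⊢
      exact key_col _ hj
end

section
/- In the arrow diagram of any partition λ, any two distinct arrows either are nested (the source and target of one lie strictly between the source and target of the other), share the same source (white dot), or are disjoint with one arrow entirely to the left of the other; in particular, two arrows never cross. -/
open Finset

/-- An arrow pair of `x_μ`: a wb pair `(lw, lb)` such that (hw-condition) the
interval `[lw, lb]` contains exactly one more white than black dot, and
(d-condition) no interval `(lw, m]` with `m < lb` contains fewer white than
black dots. -/
def ArrowPair (μ : YoungDiagram) (lw lb : ℤ) : Prop :=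
  lw < lb ∧ lw ∉ Set.range (xseq μ) ∧ lb ∈ Set.range (xseq μ) ∧
    whiteCount μ lw lb = blackCount μ lw lb + 1 ∧
    ∀ m : ℤ, lw < m → m < lb → blackCount μ (lw + 1) m ≤ whiteCount μ (lw + 1) m


section ArrowHelpers

open scoped Classical

/-- Black count as a Finset filter card. -/
noncomputable def bC (μ : YoungDiagram) (x y : ℤ) : ℕ :=
  ((Finset.Icc x y).filter (fun n => n ∈ Set.range (xseq μ))).card

/-- White count as a Finset filter card. -/
noncomputable def wC (μ : YoungDiagram) (x y : ℤ) : ℕ :=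
  ((Finset.Icc x y).filter (fun n => n ∉ Set.range (xseq μ))).card

lemma blackCount_eq_bC (μ : YoungDiagram) (x y : ℤ) : blackCount μ x y = bC μ x y := by
  have h : blackCount μ x y =
      ({n : ℤ | n ∈ Set.Icc x y ∧ n ∈ Set.range (xseq μ)} : Set ℤ).ncard :=
    Nat.card_coe_set_eq _
  rw [h, bC, ← Set.ncard_coe_finset]
  congr 1
  ext n
  simp [Set.mem_Icc, Finset.mem_Icc]

lemma whiteCount_eq_wC (μ : YoungDiagram) (x y : ℤ) : whiteCount μ x y = wC μ x y := by
  have h : whiteCount μ x y =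
      ({n : ℤ | n ∈ Set.Icc x y ∧ n ∉ Set.range (xseq μ)} : Set ℤ).ncard :=
    Nat.card_coe_set_eq _
  rw [h, wC, ← Set.ncard_coe_finset]
  congr 1
  ext n
  simp [Set.mem_Icc, Finset.mem_Icc]

lemma Icc_split (x y z : ℤ) (h1 : x ≤ y + 1) (h2 : y ≤ z) :
    Finset.Icc x z = Finset.Icc x y ∪ Finset.Icc (y + 1) z := by
  ext n
  simp only [Finset.mem_Icc, Finset.mem_union]
  omega

lemma filter_card_split (p : ℤ → Prop) [DecidablePred p] (x y z : ℤ)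
    (h1 : x ≤ y + 1) (h2 : y ≤ z) :
    ((Finset.Icc x z).filter p).card =
      ((Finset.Icc x y).filter p).card + ((Finset.Icc (y + 1) z).filter p).card := by
  rw [Icc_split x y z h1 h2, Finset.filter_union, Finset.card_union_of_disjoint]
  rw [Finset.disjoint_left]
  intro n hn hn'
  simp only [Finset.mem_filter, Finset.mem_Icc] at hn hn'
  omega

lemma bC_split (μ : YoungDiagram) (x y z : ℤ) (h1 : x ≤ y + 1) (h2 : y ≤ z) :
    bC μ x z = bC μ x y + bC μ (y + 1) z :=
  filter_card_split _ x y z h1 h2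

lemma wC_split (μ : YoungDiagram) (x y z : ℤ) (h1 : x ≤ y + 1) (h2 : y ≤ z) :
    wC μ x z = wC μ x y + wC μ (y + 1) z :=
  filter_card_split _ x y z h1 h2

lemma bC_self_white (μ : YoungDiagram) (x : ℤ) (hx : x ∉ Set.range (xseq μ)) :
    bC μ x x = 0 := by
  rw [bC, Finset.Icc_self, Finset.filter_singleton, if_neg hx]
  rfl

lemma wC_self_white (μ : YoungDiagram) (x : ℤ) (hx : x ∉ Set.range (xseq μ)) :
    wC μ x x = 1 := by
  rw [wC, Finset.Icc_self, Finset.filter_singleton, if_pos hx]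
  rfl

lemma bC_empty (μ : YoungDiagram) (x y : ℤ) (h : y < x) : bC μ x y = 0 := by
  rw [bC, Finset.Icc_eq_empty (by omega), Finset.filter_empty]
  rfl

lemma wC_empty (μ : YoungDiagram) (x y : ℤ) (h : y < x) : wC μ x y = 0 := by
  rw [wC, Finset.Icc_eq_empty (by omega), Finset.filter_empty]
  rfl

/-- From an arrow pair, the interval `(lw, lb]` has equally many whites and blacks. -/
lemma arrow_balance (μ : YoungDiagram) (lw lb : ℤ) (h : ArrowPair μ lw lb) :
    wC μ (lw + 1) lb = bC μ (lw + 1) lb := by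
  obtain ⟨hlt, hw, hb, hhw, hd⟩ := h
  rw [whiteCount_eq_wC, blackCount_eq_bC] at hhw
  rw [wC_split μ lw lw lb (by omega) hlt.le, bC_split μ lw lw lb (by omega) hlt.le,
    bC_self_white μ lw hw, wC_self_white μ lw hw] at hhw
  omega

/-- Key lemma: crossing configuration is impossible. -/
lemma arrows_key (μ : YoungDiagram) (a b c d : ℤ)
    (h₁ : ArrowPair μ a b) (h₂ : ArrowPair μ c d)
    (hac : a < c) (hcb : c ≤ b) (hbd : b ≤ d) : False := by
  have hbal₁ := arrow_balance μ a b h₁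
  have hbal₂ := arrow_balance μ c d h₂
  obtain ⟨hab, haB, hbB, hhw₁, hd₁⟩ := h₁
  obtain ⟨hcd, hcB, hdB, hhw₂, hd₂⟩ := h₂
  -- c is white, b is black, so c < b
  have hcb' : c < b := lt_of_le_of_ne hcb (by rintro rfl; exact hcB hbB)
  -- split (a+1, b] at c
  have hs1 : wC μ (a + 1) b = wC μ (a + 1) c + wC μ (c + 1) b :=
    wC_split μ (a + 1) c b (by omega) hcb
  have hs2 : bC μ (a + 1) b = bC μ (a + 1) c + bC μ (c + 1) b :=
    bC_split μ (a + 1) c b (by omega) hcb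
  -- split (a+1, c] at c-1
  have hs3 : wC μ (a + 1) c = wC μ (a + 1) (c - 1) + wC μ c c := by
    have := wC_split μ (a + 1) (c - 1) c (by omega) (by omega)
    simpa using this
  have hs4 : bC μ (a + 1) c = bC μ (a + 1) (c - 1) + bC μ c c := by
    have := bC_split μ (a + 1) (c - 1) c (by omega) (by omega)
    simpa using this
  have hcw : wC μ c c = 1 := wC_self_white μ c hcB
  have hcb0 : bC μ c c = 0 := bC_self_white μ c hcB
  -- d-condition of arrow 1 at c - 1 (or empty interval)
  have hdc : bC μ (a + 1) (c - 1) ≤ wC μ (a + 1) (c - 1) := by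
    rcases eq_or_lt_of_le (show a ≤ c - 1 by omega) with h | h
    · rw [bC_empty μ (a + 1) (c - 1) (by omega), wC_empty μ (a + 1) (c - 1) (by omega)]
    · have := hd₁ (c - 1) h (by omega)
      rw [whiteCount_eq_wC, blackCount_eq_bC] at this
      exact this
  -- so whites strictly exceed blacks on (a, c], hence blacks exceed whites on (c, b]
  have hkey : wC μ (c + 1) b < bC μ (c + 1) b := by omega
  -- but arrow 2 forces whites ≥ blacks on (c, b]
  rcases eq_or_lt_of_le hbd with h | h
  · -- b = d : balance of arrow 2
    subst h
    omega
  · have := hd₂ b hcb' h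
    rw [whiteCount_eq_wC, blackCount_eq_bC] at this
    omega

end ArrowHelpers

/-- Any two distinct arrows in the arrow diagram of a partition either are
nested, share the same source, or are disjoint with one entirely to the left of
the other; in particular arrows never cross. -/
theorem arrows_noncrossing (μ : YoungDiagram) (a b c d : ℤ)
    (h₁ : ArrowPair μ a b) (h₂ : ArrowPair μ c d) (hne : (a, b) ≠ (c, d)) :
    (c < a ∧ b < d) ∨ (a < c ∧ d < b) ∨ a = c ∨ b < c ∨ d < a := by
  by_contra h
  push_neg at h
  obtain ⟨hn1, hn2, hac, hcb, had⟩ := h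
  rcases lt_trichotomy a c with h | h | h
  · exact arrows_key μ a b c d h₁ h₂ h hcb (by by_contra hx; exact absurd (hn2 h) (by omega))
  · exact hac h
  · exact arrows_key μ c d a b h₂ h₁ h had (by by_contra hx; exact absurd hn1 (by omega))
end
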